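/- In the ring Λ of symmetric functions over ℤ (polynomial ring in h_1, h_2, h_3, …, with h_0 = 1 and h_k = 0 for k < 0), define for any n-tuple λ ∈ ℤ^n the generalized Schur function s_λ := det((h_{λ_i - i + j})_{i,j ∈ [n]}). Let λ = (λ_1, …, λ_n) be an integer partition with λ_n = 0, and let p ∈ ℕ. Then s_λ · h_p = Σ_{β ∈ ℕ^n, β_1 + ⋯ + β_n = p} s_{λ+β}, where λ+β is the entrywise sum. -/

import Mathlib

/-- The ring Λ of symmetric functions over ℤ, realized as the polynomial ring
ℤ[h₁, h₂, h₃, …] where the variable indexed by i ∈ ℕ is h_{i+1}. -/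
noncomputable abbrev Lambda : Type := MvPolynomial ℕ ℤ

/-- The complete homogeneous generator h_k ∈ Λ: h_k is the variable X (k-1) for k > 0,
h_0 = 1, and h_k = 0 for k < 0. -/
noncomputable def hh (k : ℤ) : Lambda :=
  if 0 < k then MvPolynomial.X (k.toNat - 1) else if k = 0 then 1 else 0

/-- The generalized Schur function s_λ ∈ Λ for λ ∈ ℤ^n, defined by the
Jacobi–Trudi determinant. -/
noncomputable def schur {n : ℕ} (lam : Fin n → ℤ) : Lambda :=
  Matrix.det (Matrix.of fun i j : Fin n => hh (lam i - ((i : ℕ) : ℤ) + ((j : ℕ) : ℤ)))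

lemma hh_neg (k : ℤ) (h : k < 0) : hh k = 0 := by
  rw [hh, if_neg (by omega), if_neg (by omega)]

lemma hh_zero : hh 0 = 1 := by rw [hh]; norm_num

/-- Coefficient of a finite product of power series, indexed by `antidiagonalTuple`. -/
lemma coeff_prod_tuple {R : Type*} [CommRing R] (n p : ℕ) (f : Fin n → PowerSeries R) :
    PowerSeries.coeff p (∏ i, f i)
      = ∑ β ∈ Finset.Nat.antidiagonalTuple n p, ∏ i, PowerSeries.coeff (β i) (f i) := by
  classical
  rw [PowerSeries.coeff_prod]
  refine Finset.sum_nbij' (fun l => ⇑l) (fun β => Finsupp.equivFunOnFinite.symm β)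
    ?_ ?_ ?_ ?_ ?_
  · intro l hl
    rw [Finset.mem_finsuppAntidiag] at hl
    rw [Finset.Nat.mem_antidiagonalTuple]
    exact hl.1
  · intro β hβ
    rw [Finset.Nat.mem_antidiagonalTuple] at hβ
    rw [Finset.mem_finsuppAntidiag]
    exact ⟨by simpa using hβ, Finset.subset_univ _⟩
  · intro l _; exact Finsupp.equivFunOnFinite.symm_apply_apply l
  · intro β _; rfl
  · intro l _; rfl

/-- Reindexing a sum over `antidiagonalTuple` by a permutation. -/
lemma adt_reindex {n p : ℕ} (σ : Equiv.Perm (Fin n)) {M : Type*} [AddCommMonoid M]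
    (F : (Fin n → ℕ) → M) :
    ∑ β ∈ Finset.Nat.antidiagonalTuple n p, F (β ∘ σ)
      = ∑ β ∈ Finset.Nat.antidiagonalTuple n p, F β := by
  refine Finset.sum_nbij' (fun β => β ∘ σ) (fun β => β ∘ σ.symm) ?_ ?_ ?_ ?_ ?_
  · intro β hβ
    rw [Finset.Nat.mem_antidiagonalTuple] at hβ ⊢
    rw [← hβ]; exact Equiv.sum_comp σ β
  · intro β hβ
    rw [Finset.Nat.mem_antidiagonalTuple] at hβ ⊢
    rw [← hβ]; exact Equiv.sum_comp σ.symm β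
  · intro β _; ext i; simp
  · intro β _; ext i; simp
  · intro β _; rfl


theorem alt_first_pieri (n : ℕ) (p : ℕ) (lam : Fin (n + 1) → ℤ)
    (hanti : ∀ i j : Fin (n + 1), i ≤ j → lam j ≤ lam i)
    (hpos : ∀ i, 0 ≤ lam i)
    (hlast : lam (Fin.last n) = 0) :
    schur lam * hh (p : ℤ)
      = ∑ β ∈ Finset.Nat.antidiagonalTuple (n + 1) p,
          schur (fun i => lam i + (β i : ℤ)) := by
  classical
  set M : Matrix (Fin (n+1)) (Fin (n+1)) (PowerSeries Lambda) :=
    Matrix.of (fun i j => PowerSeries.mk fun b =>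
      hh (lam i - ((i : ℕ) : ℤ) + ((j : ℕ) : ℤ) + (b : ℤ))) with hM
  set E : Matrix (Fin (n+1)) (Fin (n+1)) (PowerSeries Lambda) :=
    Matrix.of (fun k j => (if k = j then 1 else 0)
      - (if (k : ℕ) = (j : ℕ) + 1 then PowerSeries.X else 0)) with hE
  have hEdet : E.det = 1 := by
    rw [Matrix.det_of_lowerTriangular E]
    · refine Finset.prod_eq_one fun k _ => ?_
      simp [hE]
    · intro i j hij
      simp only [OrderDual.toDual_lt_toDual] at hij
      have h1 : ¬ (i = j) := ne_of_lt hij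
      have h2 : ¬ ((i : ℕ) = (j : ℕ) + 1) := by
        have := Fin.lt_iff_val_lt_val.mp hij; omega
      simp [hE, h1, h2]
  have hN : ∀ (i j : Fin (n+1)), (M * E) i j =
      if (j : ℕ) < n then PowerSeries.C (hh (lam i - ((i : ℕ) : ℤ) + ((j : ℕ) : ℤ)))
      else PowerSeries.mk fun b => hh (lam i - ((i : ℕ) : ℤ) + (n : ℤ) + (b : ℤ)) := by
    intro i j
    rw [Matrix.mul_apply]
    simp only [hE, Matrix.of_apply, mul_sub, mul_ite, mul_one, mul_zero]
    rw [Finset.sum_sub_distrib, Finset.sum_ite_eq' Finset.univ j (fun k => M i k)]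
    by_cases hj : (j : ℕ) < n
    · set j1 : Fin (n+1) := ⟨(j : ℕ) + 1, by omega⟩ with hj1
      have hcond : ∀ k : Fin (n+1), ((k : ℕ) = (j : ℕ) + 1) ↔ k = j1 := by
        intro k; rw [Fin.ext_iff]
      simp only [hcond]
      rw [Finset.sum_ite_eq' Finset.univ j1 (fun k => M i k * PowerSeries.X)]
      simp only [Finset.mem_univ, if_true, if_pos hj]
      ext b
      rcases b with _ | b
      · simp [hM, PowerSeries.coeff_zero_mul_X, PowerSeries.coeff_mk, PowerSeries.coeff_C]
      · simp only [map_sub, PowerSeries.coeff_succ_mul_X, hM, Matrix.of_apply,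
          PowerSeries.coeff_mk, PowerSeries.coeff_C, Nat.succ_ne_zero, if_false]
        have hv : ((j1 : ℕ) : ℤ) = ((j : ℕ) : ℤ) + 1 := by simp [hj1]
        rw [hv]
        have harg : lam i - ((i : ℕ) : ℤ) + ((j : ℕ) : ℤ) + ((b + 1 : ℕ) : ℤ)
            = lam i - ((i : ℕ) : ℤ) + (((j : ℕ) : ℤ) + 1) + ((b : ℕ) : ℤ) := by
          push_cast; ring
        rw [harg, sub_self]
    · have hjn : (j : ℕ) = n := by omega
      have hallfalse : ∀ k : Fin (n+1), ¬ ((k : ℕ) = (j : ℕ) + 1) := by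
        intro k; have := k.isLt; omega
      simp only [hallfalse, if_false, Finset.sum_const_zero, sub_zero,
        Finset.mem_univ, if_true, if_neg hj]
      simp [hM, hjn]
  set dmin : Lambda := Matrix.det (Matrix.of fun i j : Fin n =>
    hh (lam i.castSucc - ((i : ℕ) : ℤ) + ((j : ℕ) : ℤ))) with hdmin
  -- schur lam equals the minor determinant
  have hschur : schur lam = dmin := by
    rw [schur, Matrix.det_succ_row _ (Fin.last n)]
    rw [Finset.sum_eq_single (Fin.last n)]
    · simp only [Matrix.of_apply, Fin.val_last, hlast, Fin.succAbove_last]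
      rw [show (0 : ℤ) - (n : ℤ) + (n : ℤ) = 0 by ring, hh_zero]
      rw [show ((-1 : Lambda) ^ (n + n : ℕ)) = 1 by
        rw [← two_mul, pow_mul]; norm_num]
      rw [one_mul, one_mul, hdmin]
      congr 1
    · intro j _ hjne
      have hjlt : (j : ℕ) < n := by
        rcases Fin.lt_last_iff_ne_last.mpr hjne with h
        exact Fin.lt_iff_val_lt_val.mp h
      have : hh (lam (Fin.last n) - ((Fin.last n : ℕ) : ℤ) + ((j : ℕ) : ℤ)) = 0 := by
        rw [hlast]
        apply hh_neg
        simp only [Fin.val_last]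
        omega
      simp only [Matrix.of_apply, this, mul_zero, zero_mul]
    · intro h; exact absurd (Finset.mem_univ _) h
  -- determinant of M * E
  have hMEdet : (M * E).det
      = PowerSeries.C dmin * PowerSeries.mk (fun b => hh (b : ℤ)) := by
    rw [Matrix.det_succ_row _ (Fin.last n), Finset.sum_eq_single (Fin.last n)]
    · rw [hN]
      rw [if_neg (by simp)]
      have hsub : (M * E).submatrix (Fin.last n).succAbove (Fin.last n).succAbove
          = (Matrix.of fun i j : Fin n =>
              hh (lam i.castSucc - ((i : ℕ) : ℤ) + ((j : ℕ) : ℤ))).map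
              (PowerSeries.C) := by
        ext i j
        rw [Matrix.submatrix_apply, Fin.succAbove_last, hN]
        rw [if_pos (by simpa using j.isLt)]
        simp [Matrix.map_apply]
      rw [hsub, ← RingHom.mapMatrix_apply, ← RingHom.map_det]
      rw [show ((-1 : PowerSeries Lambda) ^ ((Fin.last n : ℕ) + (Fin.last n : ℕ))) = 1 by
        simp only [Fin.val_last]; rw [← two_mul, pow_mul]; norm_num]
      rw [one_mul, hdmin, mul_comm]
      congr 1
      ext b
      rw [PowerSeries.coeff_mk, PowerSeries.coeff_mk, hlast]
      congr 1
      push_cast; ring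
    · intro j _ hjne
      have hjlt : (j : ℕ) < n := by
        have := j.isLt
        have : (j : ℕ) ≠ n := fun h => hjne (Fin.ext (by simp [h]))
        omega
      rw [hN, if_pos hjlt, hlast]
      rw [show (0 : ℤ) - ((Fin.last n : ℕ) : ℤ) + ((j : ℕ) : ℤ)
          = ((j : ℕ) : ℤ) - (n : ℤ) by simp; ring]
      rw [hh_neg _ (by omega)]
      simp
    · intro h; exact absurd (Finset.mem_univ _) h
  have hRHS : PowerSeries.coeff p ((M * E).det) = dmin * hh (p : ℤ) := by
    rw [hMEdet, PowerSeries.coeff_C_mul, PowerSeries.coeff_mk]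
  -- coefficient of det M via multilinearity
  have hLHS : PowerSeries.coeff p (M.det)
      = ∑ β ∈ Finset.Nat.antidiagonalTuple (n + 1) p,
          schur (fun i => lam i + (β i : ℤ)) := by
    rw [Matrix.det_apply, map_sum]
    have hterm : ∀ σ : Equiv.Perm (Fin (n+1)),
        PowerSeries.coeff p (Equiv.Perm.sign σ • ∏ i, M (σ i) i)
          = ∑ β ∈ Finset.Nat.antidiagonalTuple (n+1) p,
              Equiv.Perm.sign σ •
                ∏ i, hh (lam (σ i) + ((β (σ i)) : ℤ)
                  - (((σ i) : ℕ) : ℤ) + ((i : ℕ) : ℤ)) := by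
      intro σ
      rw [Units.smul_def, map_zsmul, coeff_prod_tuple, ← Finset.smul_sum]
      rw [← adt_reindex (p := p) σ.symm (fun β =>
        ∏ i, hh (lam (σ i) + ((β (σ i)) : ℤ) - (((σ i) : ℕ) : ℤ) + ((i : ℕ) : ℤ)))]
      simp only [Units.smul_def, Finset.smul_sum]
      refine Finset.sum_congr rfl fun β _ => ?_
      congr 1
      refine Finset.prod_congr rfl fun i _ => ?_
      simp only [hM, Matrix.of_apply, PowerSeries.coeff_mk, Function.comp_apply,
        Equiv.symm_apply_apply]
      congr 1
      push_cast; ring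
    calc ∑ σ : Equiv.Perm (Fin (n+1)),
          PowerSeries.coeff p (Equiv.Perm.sign σ • ∏ i, M (σ i) i)
        = ∑ σ : Equiv.Perm (Fin (n+1)), ∑ β ∈ Finset.Nat.antidiagonalTuple (n+1) p,
            Equiv.Perm.sign σ • ∏ i, hh (lam (σ i) + ((β (σ i)) : ℤ)
              - (((σ i) : ℕ) : ℤ) + ((i : ℕ) : ℤ)) :=
          Finset.sum_congr rfl fun σ _ => hterm σ
      _ = ∑ β ∈ Finset.Nat.antidiagonalTuple (n+1) p, ∑ σ : Equiv.Perm (Fin (n+1)),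
            Equiv.Perm.sign σ • ∏ i, hh (lam (σ i) + ((β (σ i)) : ℤ)
              - (((σ i) : ℕ) : ℤ) + ((i : ℕ) : ℤ)) := Finset.sum_comm
      _ = ∑ β ∈ Finset.Nat.antidiagonalTuple (n + 1) p,
            schur (fun i => lam i + (β i : ℤ)) := by
          refine Finset.sum_congr rfl fun β _ => ?_
          rw [schur, Matrix.det_apply]
          simp only [Matrix.of_apply]
  -- assemble
  have hdetME2 : (M * E).det = M.det := by rw [Matrix.det_mul, hEdet, mul_one]
  rw [hschur, ← hLHS, ← hdetME2, hRHS]
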